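/- Let u ∈ ℝ³ be nonzero, w ∈ ℝ³, and set d := u/‖u‖ and H_d := I − 2 d ⊗ d (the Householder operator). Then the bending strain map κ̃ : (ℝ³ \ {0}) × ℝ³ → ℝ³ defined by κ̃(u, w) = (u × w)/‖u‖² is Fréchet differentiable at (u, w) with derivative (h, k) ↦ −(1/‖u‖²) · (w × (H_d h)) + (1/‖u‖) · (d × k); this is the second block row of the linearized strain operator B of the rod formulation. -/

import Mathlib

set_option maxHeartbeats 1000000

/-- The cross product on `ℝ³` with the Euclidean norm. -/
noncomputable def cross3 (u v : EuclideanSpace ℝ (Fin 3)) : EuclideanSpace ℝ (Fin 3) :=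
  (EuclideanSpace.equiv (Fin 3) ℝ).symm
    (crossProduct ((EuclideanSpace.equiv (Fin 3) ℝ) u) ((EuclideanSpace.equiv (Fin 3) ℝ) v))

abbrev E3 := EuclideanSpace ℝ (Fin 3)

lemma cross3_add_left (u v x : E3) : cross3 (u + v) x = cross3 u x + cross3 v x := by
  simp [cross3, map_add]

lemma cross3_add_right (u v x : E3) : cross3 x (u + v) = cross3 x u + cross3 x v := by
  simp [cross3, map_add]

lemma cross3_smul_left (c : ℝ) (u x : E3) : cross3 (c • u) x = c • cross3 u x := by
  simp [cross3, map_smul]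

lemma cross3_smul_right (c : ℝ) (u x : E3) : cross3 x (c • u) = c • cross3 x u := by
  simp [cross3, map_smul]

lemma cross3_anticomm (u v : E3) : cross3 u v = - cross3 v u := by
  unfold cross3
  rw [← cross_anticomm ((EuclideanSpace.equiv (Fin 3) ℝ) v) ((EuclideanSpace.equiv (Fin 3) ℝ) u),
    map_neg]

noncomputable def crossL : E3 →ₗ[ℝ] E3 →ₗ[ℝ] E3 :=
  LinearMap.mk₂ ℝ cross3 cross3_add_left (fun c u x => cross3_smul_left c u x)
    (fun x u v => cross3_add_right u v x) (fun c x u => cross3_smul_right c u x)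

noncomputable def crossCLM : E3 →L[ℝ] E3 →L[ℝ] E3 :=
  LinearMap.toContinuousLinearMap
    { toFun := fun u => LinearMap.toContinuousLinearMap (crossL u)
      map_add' := fun x y => by ext v; simp [crossL, cross3_add_left]
      map_smul' := fun c x => by ext v; simp [crossL, cross3_smul_left] }

@[simp] lemma crossCLM_apply (u v : E3) : crossCLM u v = cross3 u v := rfl

/-- The bending strain map `κ̃(u, w) = (u × w)/‖u‖²` is Fréchet differentiable
at any `(u, w)` with `u ≠ 0`, with derivative
`(h, k) ↦ −(1/‖u‖²)(w × (H_d h)) + (1/‖u‖)(d × k)`, where `d = u/‖u‖` and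
`H_d h = h − 2 (d·h) d` is the Householder operator. -/
theorem bending_strain_frechet_derivative
    (u w : EuclideanSpace ℝ (Fin 3)) (hu : u ≠ 0)
    (L : EuclideanSpace ℝ (Fin 3) × EuclideanSpace ℝ (Fin 3) →L[ℝ] EuclideanSpace ℝ (Fin 3))
    (hL : ∀ hk : EuclideanSpace ℝ (Fin 3) × EuclideanSpace ℝ (Fin 3),
      L hk = -((‖u‖ ^ 2)⁻¹ •
          cross3 w (hk.1 - (2 : ℝ) • ((inner ℝ (‖u‖⁻¹ • u) hk.1 : ℝ) • (‖u‖⁻¹ • u))))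
        + ‖u‖⁻¹ • cross3 (‖u‖⁻¹ • u) hk.2) :
    HasFDerivAt
      (fun p : EuclideanSpace ℝ (Fin 3) × EuclideanSpace ℝ (Fin 3) =>
        (‖p.1‖ ^ 2)⁻¹ • cross3 p.1 p.2) L (u, w) := by
  have hbb := (crossCLM.isBoundedBilinearMap).hasFDerivAt (u, w)
  have hn := HasFDerivAt.inner (𝕜:=ℝ) (f := fun p : E3 × E3 => p.1) (g := fun p : E3 × E3 => p.1)
    (hasFDerivAt_fst (p := ((u, w) : E3 × E3))) (hasFDerivAt_fst (p := ((u, w) : E3 × E3)))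
  have hne : (inner ℝ u u : ℝ) ≠ 0 := by
    rw [real_inner_self_eq_norm_sq]
    exact pow_ne_zero 2 (norm_ne_zero_iff.mpr hu)
  have hc := (hasDerivAt_inv hne).comp_hasFDerivAt (u, w) hn
  have key := hc.smul hbb
  have hfun : (fun p : E3 × E3 => (‖p.1‖ ^ 2)⁻¹ • cross3 p.1 p.2)
      = fun p : E3 × E3 => (inner ℝ p.1 p.1 : ℝ)⁻¹ • crossCLM p.1 p.2 := by
    funext p; rw [real_inner_self_eq_norm_sq]; rfl
  rw [hfun]
  refine key.congr_fderiv ?_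
  refine ContinuousLinearMap.ext fun hk => ?_
  have h1 : (inner ℝ (‖u‖⁻¹ • u) hk.1 : ℝ) = ‖u‖⁻¹ * (inner ℝ u hk.1 : ℝ) :=
    real_inner_smul_left _ _ _
  have hsub : cross3 w (hk.1 - (2 : ℝ) • ((‖u‖⁻¹ * (inner ℝ u hk.1 : ℝ)) • (‖u‖⁻¹ • u)))
      = cross3 w hk.1 - ((2 : ℝ) * (‖u‖⁻¹ * (inner ℝ u hk.1 : ℝ)) * ‖u‖⁻¹) • cross3 w u := by
    have := cross3_add_right (hk.1) (-((2 : ℝ) • ((‖u‖⁻¹ * (inner ℝ u hk.1 : ℝ)) • (‖u‖⁻¹ • u)))) w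
    simp only [sub_eq_add_neg]
    rw [this]
    rw [show -((2 : ℝ) • ((‖u‖⁻¹ * (inner ℝ u hk.1 : ℝ)) • (‖u‖⁻¹ • u)))
        = (-((2 : ℝ) * (‖u‖⁻¹ * (inner ℝ u hk.1 : ℝ)) * ‖u‖⁻¹)) • u by
      simp [smul_smul]; ring_nf]
    rw [cross3_smul_right]
    simp [neg_smul]
  rw [hL hk, h1, hsub]
  simp only [ContinuousLinearMap.add_apply, ContinuousLinearMap.smul_apply,
    ContinuousLinearMap.smulRight_apply, ContinuousLinearMap.comp_apply,
    ContinuousLinearMap.prod_apply, ContinuousLinearMap.coe_fst',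
    fderivInnerCLM_apply, crossCLM_apply, real_inner_self_eq_norm_sq]
  rw [IsBoundedBilinearMap.deriv_apply]
  simp only [crossCLM_apply]
  rw [cross3_anticomm w hk.1, cross3_anticomm w u,
    cross3_smul_left ‖u‖⁻¹ u hk.2, real_inner_comm hk.1 u]
  simp only [Function.comp_apply]
  set a := cross3 hk.1 w
  set b := cross3 u w
  set c := cross3 u hk.2
  set r := ‖u‖
  set s := (inner ℝ hk.1 u : ℝ)
  match_scalars <;> (first | ring1 | (rw [smul_eq_mul]; ring1))
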